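/- Let (X,d) be a compact metric space, c > 0 an isolated local minimum value of d, and suppose the set M_c of pairs (x,y) with d(x,y) = c at which d attains a local minimum consists of a single pair {(x,y)}. Suppose there exists z ∈ X \ {x, y} with d(z,x) ≤ c and d(z,y) ≤ c. Then for every 1-cycle α in Rips(X, r) with r slightly larger than c, the homology class [α] has a representative all of whose edges have length strictly less than c; hence c is not an emergent critical value of H₁ of the open Rips filtration. Specifically: every occurrence of the edge ⟨x,y⟩ in a cycle can be replaced via the boundary of the 2-simplex ⟨x,z,y⟩, and every other edge of length exactly c or in [c,r) can be shortened by descent since it is not a local minimum of d. -/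

import Mathlib

/-- The simplicial boundary of a `1`-chain with coefficients in `G`. -/
noncomputable def bd1 {V : Type*} (G : Type*) [AddCommGroup G] (c : (V × V) →₀ G) :
    V →₀ G :=
  c.sum fun p g => Finsupp.single p.2 g - Finsupp.single p.1 g

/-- The simplicial boundary of a `2`-chain with coefficients in `G`. -/
noncomputable def bd2 {V : Type*} (G : Type*) [AddCommGroup G] (w : (V × V × V) →₀ G) :
    (V × V) →₀ G :=
  w.sum fun t g =>
    Finsupp.single (t.2.1, t.2.2) g - Finsupp.single (t.1, t.2.2) g +
      Finsupp.single (t.1, t.2.1) g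

/-- A `1`-cycle in the open Rips complex of `X` at scale `r`: a `1`-chain supported on
pairs at distance `< r` with vanishing boundary. -/
def IsRipsCycle {X : Type*} [MetricSpace X] {G : Type*} [AddCommGroup G] (r : ℝ)
    (c : (X × X) →₀ G) : Prop :=
  (∀ p ∈ c.support, dist p.1 p.2 < r) ∧ bd1 G c = 0

/-- Two `1`-chains are homologous in the open Rips complex at scale `r` if their
difference is the boundary of a `2`-chain supported on triples of diameter `< r`. -/
def RipsHomologous {X : Type*} [MetricSpace X] (G : Type*) [AddCommGroup G] (r : ℝ)
    (c c' : (X × X) →₀ G) : Prop :=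
  ∃ w : (X × X × X) →₀ G,
    (∀ t ∈ w.support,
      dist t.1 t.2.1 < r ∧ dist t.1 t.2.2 < r ∧ dist t.2.1 t.2.2 < r) ∧
    c - c' = bd2 G w

/-- The distance function of `X` attains a local minimum at the pair `(x, y)`. -/
def LocMinPair {X : Type*} [MetricSpace X] (x y : X) : Prop :=
  ∃ ε > 0, ∀ x' y' : X, dist x x' < ε → dist y y' < ε → dist x y ≤ dist x' y'

/-- `m` is a local minimum value of the distance function of `X`. -/
def IsLocMinVal (X : Type*) [MetricSpace X] (m : ℝ) : Prop :=
  ∃ a b : X, dist a b = m ∧ LocMinPair a b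

section Alg
variable {V : Type*} {G : Type*} [AddCommGroup G]

lemma bd1_zero : bd1 G (0 : (V × V) →₀ G) = 0 := Finsupp.sum_zero_index

lemma bd1_add (c d : (V × V) →₀ G) : bd1 G (c + d) = bd1 G c + bd1 G d := by
  refine Finsupp.sum_add_index' (fun _ => by simp) (fun p g₁ g₂ => ?_)
  rw [Finsupp.single_add, Finsupp.single_add]; abel

lemma bd1_single (p : V × V) (g : G) :
    bd1 G (Finsupp.single p g) = Finsupp.single p.2 g - Finsupp.single p.1 g := by
  refine Finsupp.sum_single_index (by simp)

lemma bd2_zero : bd2 G (0 : (V × V × V) →₀ G) = 0 := Finsupp.sum_zero_index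

lemma bd2_add (c d : (V × V × V) →₀ G) : bd2 G (c + d) = bd2 G c + bd2 G d := by
  refine Finsupp.sum_add_index' (fun _ => by simp) (fun p g₁ g₂ => ?_)
  rw [Finsupp.single_add, Finsupp.single_add, Finsupp.single_add]; abel

lemma bd2_single (t : V × V × V) (g : G) :
    bd2 G (Finsupp.single t g) =
      Finsupp.single (t.2.1, t.2.2) g - Finsupp.single (t.1, t.2.2) g +
        Finsupp.single (t.1, t.2.1) g := by
  refine Finsupp.sum_single_index (by simp)

/-- `bd1` as an additive homomorphism. -/
noncomputable def bd1Hom : ((V × V) →₀ G) →+ (V →₀ G) :=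
  ⟨⟨bd1 G, bd1_zero⟩, bd1_add⟩

/-- `bd2` as an additive homomorphism. -/
noncomputable def bd2Hom : ((V × V × V) →₀ G) →+ ((V × V) →₀ G) :=
  ⟨⟨bd2 G, bd2_zero⟩, bd2_add⟩

lemma bd1_bd2 (w : (V × V × V) →₀ G) : bd1 G (bd2 G w) = 0 := by
  induction w using Finsupp.induction with
  | zero => simp [bd2_zero, bd1_zero]
  | single_add t g w ht hg ih =>
      rw [bd2_add, bd1_add, ih, bd2_single]
      have h1 : bd1 G (Finsupp.single (t.2.1, t.2.2) g - Finsupp.single (t.1, t.2.2) g +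
          Finsupp.single (t.1, t.2.1) g) =
          bd1 G (Finsupp.single (t.2.1, t.2.2) g) - bd1 G (Finsupp.single (t.1, t.2.2) g) +
          bd1 G (Finsupp.single (t.1, t.2.1) g) := by
        rw [show bd1 G = (bd1Hom : ((V × V) →₀ G) →+ (V →₀ G)) from rfl]
        simp [map_sub, map_add]
      rw [h1, bd1_single, bd1_single, bd1_single]
      abel
end Alg

section Red
variable {X : Type*} [MetricSpace X] (G : Type*) [AddCommGroup G]

/-- All triangles in the support of `w` have diameter `< r`. -/
def Tri (r : ℝ) (w : (X × X × X) →₀ G) : Prop :=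
  ∀ t ∈ w.support,
    dist t.1 t.2.1 < r ∧ dist t.1 t.2.2 < r ∧ dist t.2.1 t.2.2 < r

variable {G}

lemma tri_zero (r : ℝ) : Tri G r (0 : (X × X × X) →₀ G) := by
  intro t ht; simp at ht

lemma tri_add {r : ℝ} {w₁ w₂ : (X × X × X) →₀ G} (h₁ : Tri G r w₁) (h₂ : Tri G r w₂) :
    Tri G r (w₁ + w₂) := by
  classical
  intro t ht
  rcases Finset.mem_union.1 (Finsupp.support_add ht) with h | h
  · exact h₁ t h
  · exact h₂ t h

lemma tri_single {r : ℝ} {t : X × X × X} (h1 : dist t.1 t.2.1 < r)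
    (h2 : dist t.1 t.2.2 < r) (h3 : dist t.2.1 t.2.2 < r) (g : G) :
    Tri G r (Finsupp.single t g) := by
  intro s hs
  have := Finsupp.support_single_subset hs
  simp at this
  subst this
  exact ⟨h1, h2, h3⟩

lemma tri_sum {r : ℝ} {ι : Type*} (s : Finset ι) (f : ι → (X × X × X) →₀ G)
    (h : ∀ i ∈ s, Tri G r (f i)) : Tri G r (∑ i ∈ s, f i) :=
  Finset.sum_induction f (Tri G r) (fun _ _ => tri_add) (tri_zero r) h

variable (G)

/-- `q` "reduces to" `p` at scale `r`: the difference of the two edges is, modulo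
edges of length `< c`, a boundary of triangles of diameter `< r`. -/
def RedTo (c r : ℝ) (q p : X × X) : Prop :=
  ∀ g : G, ∃ (β : (X × X) →₀ G) (w : (X × X × X) →₀ G),
    (∀ e ∈ β.support, dist e.1 e.2 < c) ∧ Tri G r w ∧
    Finsupp.single q g - Finsupp.single p g - β = bd2 G w

/-- `q` is reducible: the edge `q` is, modulo a boundary at scale `r`, a chain of
edges of length `< c`. -/
def Red (c r : ℝ) (q : X × X) : Prop :=
  ∀ g : G, ∃ (β : (X × X) →₀ G) (w : (X × X × X) →₀ G),
    (∀ e ∈ β.support, dist e.1 e.2 < c) ∧ Tri G r w ∧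
    Finsupp.single q g - β = bd2 G w

variable {G}

lemma redTo_refl (c r : ℝ) (q : X × X) : RedTo G c r q q := by
  intro g
  exact ⟨0, 0, by simp, tri_zero r, by simp [bd2_zero]⟩

lemma redTo_trans {c r : ℝ} {q p s : X × X} (h₁ : RedTo G c r q p)
    (h₂ : RedTo G c r p s) : RedTo G c r q s := by
  classical
  intro g
  obtain ⟨β₁, w₁, hβ₁, hw₁, he₁⟩ := h₁ g
  obtain ⟨β₂, w₂, hβ₂, hw₂, he₂⟩ := h₂ g
  refine ⟨β₁ + β₂, w₁ + w₂, ?_, tri_add hw₁ hw₂, ?_⟩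
  · intro e he
    rcases Finset.mem_union.1 (Finsupp.support_add he) with h | h
    · exact hβ₁ e h
    · exact hβ₂ e h
  · rw [bd2_add, ← he₁, ← he₂]; abel

lemma redTo_red {c r : ℝ} {q p : X × X} (h₁ : RedTo G c r q p) (h₂ : Red G c r p) :
    Red G c r q := by
  classical
  intro g
  obtain ⟨β₁, w₁, hβ₁, hw₁, he₁⟩ := h₁ g
  obtain ⟨β₂, w₂, hβ₂, hw₂, he₂⟩ := h₂ g
  refine ⟨β₁ + β₂, w₁ + w₂, ?_, tri_add hw₁ hw₂, ?_⟩
  · intro e he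
    rcases Finset.mem_union.1 (Finsupp.support_add he) with h | h
    · exact hβ₁ e h
    · exact hβ₂ e h
  · rw [bd2_add, ← he₁, ← he₂]; abel

lemma red_base {c r : ℝ} {q : X × X} (h : dist q.1 q.2 < c) : Red G c r q := by
  intro g
  refine ⟨Finsupp.single q g, 0, ?_, tri_zero r, by simp [bd2_zero]⟩
  intro e he
  have := Finsupp.support_single_subset he
  simp at this
  subst this
  exact h

/-- One descent step: move both endpoints by `< c`, keeping all triangle sides `< r`. -/
lemma redTo_step {c r : ℝ} {a b a' b' : X}
    (haa' : dist a a' < c) (hbb' : dist b' b < c)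
    (h1 : dist a a' < r) (h2 : dist a b < r) (h3 : dist a' b < r)
    (h4 : dist a' b' < r) (h5 : dist b' b < r) :
    RedTo G c r (a, b) (a', b') := by
  classical
  intro g
  refine ⟨Finsupp.single (a, a') g + Finsupp.single (b', b) g,
    Finsupp.single (a, a', b) (-g) + Finsupp.single (a', b', b) (-g), ?_, ?_, ?_⟩
  · intro e he
    rcases Finset.mem_union.1 (Finsupp.support_add he) with h | h
    · have := Finsupp.support_single_subset h
      simp at this; subst this; exact haa'
    · have := Finsupp.support_single_subset h
      simp at this; subst this; exact hbb'
  · exact tri_add (tri_single h1 h2 h3 _) (tri_single h4 h3 h5 _)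
  · rw [bd2_add, bd2_single, bd2_single]
    simp only [Finsupp.single_neg]
    abel

/-- Merging along a triangle: if both legs are reducible, so is the long edge. -/
lemma red_merge {c r : ℝ} {u v t : X} (h₁ : Red G c r (u, v)) (h₂ : Red G c r (v, t))
    (d1 : dist u v < r) (d2 : dist u t < r) (d3 : dist v t < r) :
    Red G c r (u, t) := by
  classical
  intro g
  obtain ⟨β₁, w₁, hβ₁, hw₁, he₁⟩ := h₁ g
  obtain ⟨β₂, w₂, hβ₂, hw₂, he₂⟩ := h₂ g
  refine ⟨β₁ + β₂, w₁ + w₂ + Finsupp.single (u, v, t) (-g), ?_, ?_, ?_⟩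
  · intro e he
    rcases Finset.mem_union.1 (Finsupp.support_add he) with h | h
    · exact hβ₁ e h
    · exact hβ₂ e h
  · exact tri_add (tri_add hw₁ hw₂) (tri_single d1 d2 d3 _)
  · rw [bd2_add, bd2_add, ← he₁, ← he₂, bd2_single]
    simp only [Finsupp.single_neg]
    abel

lemma not_locMinPair_descent {a b : X} (h : ¬ LocMinPair a b) {δ : ℝ} (hδ : 0 < δ) :
    ∃ a' b' : X, dist a a' < δ ∧ dist b b' < δ ∧ dist a' b' < dist a b := by
  unfold LocMinPair at h
  push_neg at h
  obtain ⟨a', b', h1, h2, h3⟩ := h δ hδ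
  exact ⟨a', b', h1, h2, h3⟩

/-- A pair of length `≤ c` which is not a local minimum (when of length exactly `c`)
is reducible. -/
lemma red_of_nonmin {c r : ℝ} (hc : 0 < c) (hcr : c < r) {u v : X}
    (hle : dist u v ≤ c) (hnm : dist u v = c → ¬ LocMinPair u v) :
    Red G c r (u, v) := by
  rcases lt_or_eq_of_le hle with hlt | heq
  · exact red_base hlt
  · have hnm' := hnm heq
    have hδ : (0:ℝ) < min (c/2) ((r - c)/2) := by
      apply lt_min <;> linarith
    obtain ⟨a', b', h1, h2, h3⟩ := not_locMinPair_descent hnm' hδ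
    have hd1 : dist a' b' < c := by rw [heq] at h3; exact h3
    refine redTo_red (redTo_step ?_ ?_ ?_ ?_ ?_ ?_ ?_) (red_base hd1)
    · exact lt_of_lt_of_le h1 (le_trans (min_le_left _ _) (by linarith))
    · rw [dist_comm]
      exact lt_of_lt_of_le h2 (le_trans (min_le_left _ _) (by linarith))
    · exact lt_of_lt_of_le h1 (le_trans (min_le_left _ _) (by linarith))
    · rw [heq]; exact hcr
    · calc dist a' v ≤ dist a' b' + dist b' v := dist_triangle _ _ _
        _ < c + min (c/2) ((r - c)/2) := by
            rw [dist_comm b' v]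
            exact add_lt_add hd1 h2
        _ ≤ c + (r - c)/2 := by
            have := min_le_right (c/2) ((r - c)/2)
            linarith
        _ < r := by linarith
    · exact lt_trans hd1 hcr
    · rw [dist_comm]
      exact lt_of_lt_of_le h2 (le_trans (min_le_left _ _) (by linarith))
end Red

section Main
variable {X : Type*} [MetricSpace X] [CompactSpace X] {G : Type*} [AddCommGroup G]

lemma red_all {c : ℝ} (hc : 0 < c) {x y : X} (hxy : dist x y = c)
    {ε₀ : ℝ} (hε₀ : 0 < ε₀)
    (hiso : ∀ m ∈ Set.Ioo (c - ε₀) (c + ε₀), IsLocMinVal X m → m = c)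
    (huniq : ∀ a b : X, LocMinPair a b → dist a b = c →
      (a = x ∧ b = y) ∨ (a = y ∧ b = x))
    {z : X} (hzx : z ≠ x) (hzy : z ≠ y) (hdzx : dist z x ≤ c) (hdzy : dist z y ≤ c)
    {r : ℝ} (hcr : c < r) (hrε : r < c + ε₀) :
    ∀ q : X × X, dist q.1 q.2 < r → Red G c r q := by
  have hxy0 : x ≠ y := by
    intro h; rw [h, dist_self] at hxy; linarith
  -- reducibility of the four special legs
  have red_xz : Red G c r (x, z) := by
    refine red_of_nonmin hc hcr (by rw [dist_comm]; exact hdzx) (fun heq hlm => ?_)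
    rcases huniq x z hlm heq with ⟨_, h2⟩ | ⟨_, h2⟩
    · exact hzy h2
    · exact hzx h2
  have red_zy : Red G c r (z, y) := by
    refine red_of_nonmin hc hcr hdzy (fun heq hlm => ?_)
    rcases huniq z y hlm heq with ⟨h1, _⟩ | ⟨h1, _⟩
    · exact hzx h1
    · exact hzy h1
  have red_yz : Red G c r (y, z) := by
    refine red_of_nonmin hc hcr (by rw [dist_comm]; exact hdzy) (fun heq hlm => ?_)
    rcases huniq y z hlm heq with ⟨h1, h2⟩ | ⟨h1, h2⟩
    · exact hzy h2
    · exact hzx h2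
  have red_zx : Red G c r (z, x) := by
    refine red_of_nonmin hc hcr hdzx (fun heq hlm => ?_)
    rcases huniq z x hlm heq with ⟨h1, _⟩ | ⟨h1, _⟩
    · exact hzx h1
    · exact hzy h1
  have red_xy : Red G c r (x, y) :=
    red_merge red_xz red_zy
      (by rw [dist_comm]; exact lt_of_le_of_lt hdzx hcr)
      (by rw [hxy]; exact hcr)
      (lt_of_le_of_lt hdzy hcr)
  have red_yx : Red G c r (y, x) :=
    red_merge red_yz red_zx
      (by rw [dist_comm]; exact lt_of_le_of_lt hdzy hcr)
      (by rw [dist_comm, hxy]; exact hcr)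
      (lt_of_le_of_lt hdzx hcr)
  intro q hq
  -- the set of pairs reachable from q
  set A : Set (X × X) := {p | RedTo G c r q p ∧ dist p.1 p.2 < r} with hA
  have hAq : q ∈ A := ⟨redTo_refl c r q, hq⟩
  have hKc : IsCompact (closure A) := IsClosed.isCompact isClosed_closure
  have hKne : (closure A).Nonempty := ⟨q, subset_closure hAq⟩
  obtain ⟨pm, hpmK, hpmmin⟩ := hKc.exists_isMinOn hKne
    (continuous_dist.comp (continuous_fst.prodMk continuous_snd)).continuousOn
  set u := dist pm.1 pm.2 with hu
  have hu_le : ∀ p ∈ A, u ≤ dist p.1 p.2 := fun p hp => hpmmin (subset_closure hp)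
  have hur : u < r := lt_of_le_of_lt (hu_le q hAq) hq
  -- the minimiser is itself reachable
  have hpmA : pm ∈ A := by
    have hδ : (0:ℝ) < min (c/2) ((r - u)/2) := by
      apply lt_min <;> linarith
    obtain ⟨p₀, hp₀A, hp₀d⟩ := Metric.mem_closure_iff.1 hpmK _ hδ
    have hfst : dist pm.1 p₀.1 ≤ dist pm p₀ := le_max_left _ _
    have hsnd : dist pm.2 p₀.2 ≤ dist pm p₀ := le_max_right _ _
    have hstep : RedTo G c r p₀ pm := by
      have := redTo_step (G := G) (c := c) (r := r)
        (a := p₀.1) (b := p₀.2) (a' := pm.1) (b' := pm.2)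
        (by rw [dist_comm]; exact lt_of_le_of_lt hfst
              (lt_of_lt_of_le hp₀d (le_trans (min_le_left _ _) (by linarith))))
        (by exact lt_of_le_of_lt hsnd
              (lt_of_lt_of_le hp₀d (le_trans (min_le_left _ _) (by linarith))))
        (by rw [dist_comm]; exact lt_of_le_of_lt hfst (lt_trans hp₀d (by
              have := min_le_left (c/2) ((r - u)/2); linarith)))
        hp₀A.2
        (by calc dist pm.1 p₀.2 ≤ dist pm.1 pm.2 + dist pm.2 p₀.2 := dist_triangle _ _ _
              _ < u + min (c/2) ((r-u)/2) := by
                  have := lt_of_le_of_lt hsnd hp₀d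
                  rw [← hu]; linarith
              _ ≤ u + (r - u)/2 := by
                  have := min_le_right (c/2) ((r - u)/2); linarith
              _ < r := by linarith)
        hur
        (by exact lt_of_le_of_lt hsnd (lt_trans hp₀d (by
              have := min_le_left (c/2) ((r - u)/2); linarith)))
      exact this
    exact ⟨redTo_trans hp₀A.1 hstep, hur⟩
  -- split on whether u < c
  rcases lt_or_ge u c with huc | huc
  · exact redTo_red hpmA.1 (red_base huc)
  by_cases hlm : LocMinPair pm.1 pm.2
  · -- the minimiser is a local-minimum pair, hence equals (x,y) or (y,x)
    have hval : IsLocMinVal X u := ⟨pm.1, pm.2, rfl, hlm⟩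
    have huC : u = c := hiso u ⟨by linarith, by linarith⟩ hval
    rcases huniq pm.1 pm.2 hlm (by rw [← hu, huC]) with ⟨h1, h2⟩ | ⟨h1, h2⟩
    · have hpm : pm = (x, y) := Prod.ext h1 h2
      rw [hpm] at hpmA
      exact redTo_red hpmA.1 red_xy
    · have hpm : pm = (y, x) := Prod.ext h1 h2
      rw [hpm] at hpmA
      exact redTo_red hpmA.1 red_yx
  · -- the minimiser is not a local minimum: descend strictly, contradiction
    exfalso
    have hδ : (0:ℝ) < min (c/2) ((r - u)/2) := by
      apply lt_min <;> linarith
    obtain ⟨a', b', h1, h2, h3⟩ := not_locMinPair_descent hlm hδ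
    have h3' : dist a' b' < u := by rw [hu]; exact h3
    have hstep : RedTo G c r pm (a', b') := by
      have := redTo_step (G := G) (c := c) (r := r)
        (a := pm.1) (b := pm.2) (a' := a') (b' := b')
        (lt_of_lt_of_le h1 (le_trans (min_le_left _ _) (by linarith)))
        (by rw [dist_comm]; exact lt_of_lt_of_le h2 (le_trans (min_le_left _ _) (by linarith)))
        (lt_of_lt_of_le h1 (le_trans (min_le_left _ _) (by linarith)))
        hur
        (by calc dist a' pm.2 ≤ dist a' b' + dist b' pm.2 := dist_triangle _ _ _
              _ < u + min (c/2) ((r-u)/2) := by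
                  rw [dist_comm b' pm.2]; exact add_lt_add h3' h2
              _ ≤ u + (r - u)/2 := by
                  have := min_le_right (c/2) ((r - u)/2); linarith
              _ < r := by linarith)
        (lt_trans h3' hur)
        (by rw [dist_comm]; exact lt_of_lt_of_le h2 (le_trans (min_le_left _ _) (by linarith)))
      exact this
    have hmem : (a', b') ∈ A := ⟨redTo_trans hpmA.1 hstep, lt_trans h3' hur⟩
    exact absurd (hu_le _ hmem) (by simp only [not_le]; exact h3')
end Main

/-- if `c > 0` is an isolated local minimum value of `d`, the only
local-minimum pair at distance `c` is `(x, y)` (up to order), and there is a point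
`z ∉ {x, y}` with `d(z,x) ≤ c` and `d(z,y) ≤ c`, then for every scale `r` slightly
larger than `c`, every `1`-cycle of `Rips(X, r)` is homologous (at scale `r`) to a cycle
all of whose edges have length `< c`; hence `c` is not an emergent critical value of
`H₁`. -/
theorem stmt_13 {X : Type*} [MetricSpace X] [CompactSpace X] (G : Type*)
    [AddCommGroup G] (c : ℝ) (hc : 0 < c) (x y : X)
    (hxy : dist x y = c) (hmin : LocMinPair x y)
    (hiso : ∃ ε > 0, ∀ m ∈ Set.Ioo (c - ε) (c + ε), IsLocMinVal X m → m = c)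
    (huniq : ∀ a b : X, LocMinPair a b → dist a b = c →
      (a = x ∧ b = y) ∨ (a = y ∧ b = x))
    (z : X) (hzx : z ≠ x) (hzy : z ≠ y) (hdzx : dist z x ≤ c) (hdzy : dist z y ≤ c) :
    ∃ ε > 0, ∀ r : ℝ, c < r → r < c + ε → ∀ α : (X × X) →₀ G, IsRipsCycle r α →
      ∃ α' : (X × X) →₀ G, RipsHomologous G r α α' ∧
        (∀ p ∈ α'.support, dist p.1 p.2 < c) ∧ IsRipsCycle r α' := by
  classical
  obtain ⟨ε₀, hε₀, hiso'⟩ := hiso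
  refine ⟨ε₀, hε₀, fun r hcr hrε α hα => ?_⟩
  have hred : ∀ q : X × X, dist q.1 q.2 < r → Red G c r q :=
    red_all hc hxy hε₀ hiso' huniq hzx hzy hdzx hdzy hcr hrε
  set B : Finset (X × X) := α.support.filter (fun p => ¬ dist p.1 p.2 < c) with hB
  have hchoice : ∀ q ∈ B, ∃ (β : (X × X) →₀ G) (w : (X × X × X) →₀ G),
      (∀ e ∈ β.support, dist e.1 e.2 < c) ∧ Tri G r w ∧
      Finsupp.single q (α q) - β = bd2 G w := by
    intro q hq
    have hq1 : q ∈ α.support := (Finset.mem_filter.1 hq).1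
    exact hred q (hα.1 q hq1) (α q)
  choose βf wf hβ hw heq using hchoice
  set α' : (X × X) →₀ G :=
    α.filter (fun p => dist p.1 p.2 < c) + ∑ q ∈ B.attach, βf q.1 q.2 with hα'
  set W : (X × X × X) →₀ G := ∑ q ∈ B.attach, wf q.1 q.2 with hW
  have hsplit : ∑ q ∈ B.attach, Finsupp.single q.1 (α q.1) =
      α.filter (fun p => ¬ dist p.1 p.2 < c) := by
    rw [Finset.sum_attach B (fun q => Finsupp.single q (α q))]
    conv_rhs => rw [← Finsupp.sum_single (α.filter (fun p => ¬ dist p.1 p.2 < c))]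
    rw [Finsupp.sum, Finsupp.support_filter]
    refine Finset.sum_congr rfl (fun q hq => ?_)
    rw [Finsupp.filter_apply_pos]
    exact (Finset.mem_filter.1 hq).2
  have hdiff : α - α' = bd2 G W := by
    have h0 : α.filter (fun p => dist p.1 p.2 < c) +
        α.filter (fun p => ¬ dist p.1 p.2 < c) = α :=
      Finsupp.filter_pos_add_filter_neg α _
    have h1 : α - α' = ∑ q ∈ B.attach, (Finsupp.single q.1 (α q.1) - βf q.1 q.2) := by
      rw [Finset.sum_sub_distrib, hsplit, hα']
      nth_rewrite 1 [← h0]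
      abel
    rw [h1, hW]
    have h2 : ∀ q ∈ B.attach,
        Finsupp.single q.1 (α q.1) - βf q.1 q.2 = bd2 G (wf q.1 q.2) :=
      fun q _ => heq q.1 q.2
    rw [Finset.sum_congr rfl h2]
    exact (map_sum (bd2Hom (V := X) (G := G)) (fun q : {x // x ∈ B} => wf q.1 q.2)
      B.attach).symm
  have hsupp : ∀ p ∈ α'.support, dist p.1 p.2 < c := by
    intro p hp
    rcases Finset.mem_union.1 (Finsupp.support_add hp) with h | h
    · rw [Finsupp.support_filter, Finset.mem_filter] at h
      exact h.2
    · obtain ⟨q, _, hq2⟩ := Finsupp.mem_support_finset_sum p h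
      exact hβ q.1 q.2 p hq2
  refine ⟨α', ⟨W, ?_, hdiff⟩, hsupp, ?_, ?_⟩
  · exact tri_sum _ _ (fun q _ => hw q.1 q.2)
  · exact fun p hp => lt_trans (hsupp p hp) hcr
  · have : bd1 G α - bd1 G α' = bd1 G (α - α') := (map_sub bd1Hom α α').symm
    have h2 : bd1 G (α - α') = 0 := by rw [hdiff]; exact bd1_bd2 W
    have h3 := hα.2
    have : bd1 G α' = bd1 G α - bd1 G (α - α') := by
      rw [← this]; abel
    rw [this, h2, h3, sub_zero]
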